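/- Chain lemma for piecewise-monotone paths: let X be a preordered set, γ : ℝ → X a function, a ≤ b real numbers, and I a finite family of open intervals of ℝ covering [a,b] such that γ is monotone (order-preserving) on each interval of the family. Then γ(a) ≤ γ(b). -/
import Mathlib


theorem chain_lemma_piecewise_monotone {X : Type*} [Preorder X] (γ : ℝ → X)
    {a b : ℝ} (hab : a ≤ b) {ι : Type*} [Finite ι] (c d : ι → ℝ)
    (hcover : Set.Icc a b ⊆ ⋃ i, Set.Ioo (c i) (d i))
    (hmono : ∀ i, MonotoneOn γ (Set.Ioo (c i) (d i))) :
    γ a ≤ γ b := by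
  set T : Set ℝ := {x | x ∈ Set.Icc a b ∧ γ a ≤ γ x} with hT
  have haT : a ∈ T := ⟨⟨le_refl a, hab⟩, le_refl _⟩
  have hne : T.Nonempty := ⟨a, haT⟩
  have hbdd : BddAbove T := ⟨b, fun x hx => hx.1.2⟩
  set s := sSup T with hs
  have has : a ≤ s := le_csSup hbdd haT
  have hsb : s ≤ b := csSup_le hne (fun x hx => hx.1.2)
  obtain ⟨i, hi⟩ : ∃ i, s ∈ Set.Ioo (c i) (d i) := by
    have := hcover ⟨has, hsb⟩
    simpa using this
  obtain ⟨t, htT, hct⟩ := exists_lt_of_lt_csSup hne hi.1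
  have hts : t ≤ s := le_csSup hbdd htT
  have htI : t ∈ Set.Ioo (c i) (d i) := ⟨hct, lt_of_le_of_lt hts hi.2⟩
  have hγs : γ a ≤ γ s := htT.2.trans (hmono i htI hi hts)
  rcases eq_or_lt_of_le hsb with h | h
  · exact h ▸ hγs
  · exfalso
    set x := (s + min b (d i)) / 2 with hx
    have hsx : s < x := by
      have : s < min b (d i) := lt_min h hi.2
      simp only [hx]; linarith
    have hxb : x ≤ b := by
      have h1 : min b (d i) ≤ b := min_le_left _ _
      simp only [hx]; linarith
    have hxd : x < d i := by
      have h1 : min b (d i) ≤ d i := min_le_right _ _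
      simp only [hx]; linarith
    have hxI : x ∈ Set.Ioo (c i) (d i) := ⟨hi.1.trans hsx, hxd⟩
    have hxT : x ∈ T := ⟨⟨has.trans hsx.le, hxb⟩, hγs.trans (hmono i hi hxI hsx.le)⟩
    exact absurd (le_csSup hbdd hxT) (not_le.mpr hsx)
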